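/- Let q be a real number with q > 1 and let m, N be integers with 0 ≤ m ≤ N. Then Σ_{i=0}^{m} (−1)^{m−i} · q^{(m−i)(m−i−1)/2} · [m choose i]_q · (∏_{k=i+1}^{m} (q^k + 1)) · q^{(2i+1)N} = Σ_{ℓ=0}^{m} (−1)^{ℓ} · q^{N + (m−ℓ)(m−ℓ−1) + ℓ²} · [m choose ℓ]_{q²} · ∏_{j=0}^{m−ℓ−1} (q^{2(N−j)} − 1). -/

import Mathlib

/-- The Gaussian binomial coefficient `[n choose k]_q` for a real base `q`. -/
noncomputable def gbinom (q : ℝ) (n k : ℕ) : ℝ :=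
  ∏ j ∈ Finset.Icc 1 k, (q ^ (n - k + j) - 1) / (q ^ j - 1)

noncomputable def qfac (q : ℝ) (n : ℕ) : ℝ := ∏ j ∈ Finset.Ioc 0 n, (q ^ j - 1)
noncomputable def qpl (q : ℝ) (n : ℕ) : ℝ := ∏ j ∈ Finset.Ioc 0 n, (q ^ j + 1)

variable {q : ℝ}

lemma qfac_pos (hq : 1 < q) (n : ℕ) : 0 < qfac q n := by
  apply Finset.prod_pos
  intro j hj
  have : 1 < q ^ j := one_lt_pow₀ hq (by have := (Finset.mem_Ioc.mp hj).1; omega)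
  linarith

lemma qpl_pos (hq : 1 < q) (n : ℕ) : 0 < qpl q n := by
  apply Finset.prod_pos; intro j hj; positivity

lemma qfac_split {k n : ℕ} (h : k ≤ n) :
    qfac q n = qfac q k * ∏ j ∈ Finset.Icc 1 (n - k), (q ^ (k + j) - 1) := by
  unfold qfac
  rw [← Finset.prod_Ioc_consecutive _ (Nat.zero_le k) h]
  congr 1
  rw [show Finset.Icc 1 (n - k) = Finset.Ioc 0 (n - k) from Finset.Icc_add_one_left_eq_Ioc 0 (n - k)]
  exact Finset.prod_nbij' (fun x => x - k) (fun x => k + x)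
    (by intro a ha; simp only [Finset.mem_Ioc] at *; omega)
    (by intro a ha; simp only [Finset.mem_Ioc] at *; omega)
    (by intro a ha; simp only [Finset.mem_Ioc] at ha; omega)
    (by intro a ha; simp only [Finset.mem_Ioc] at ha; omega)
    (by intro a ha; simp only [Finset.mem_Ioc] at ha
        have : k + (a - k) = a := by omega
        rw [this])

lemma gbinom_eq (hq : 1 < q) {k n : ℕ} (h : k ≤ n) :
    gbinom q n k = qfac q n / (qfac q k * qfac q (n - k)) := by
  have e1 : n - (n - k) = k := by omega
  have h1 : qfac q n = qfac q (n - k) * ∏ j ∈ Finset.Icc 1 k, (q ^ (n - k + j) - 1) := by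
    rw [qfac_split (Nat.sub_le n k), e1]
  rw [h1]
  have h2 : qfac q k = ∏ j ∈ Finset.Icc 1 k, (q ^ j - 1) := by
    unfold qfac; rw [show Finset.Icc 1 k = Finset.Ioc 0 k from Finset.Icc_add_one_left_eq_Ioc 0 k]
  rw [gbinom, Finset.prod_div_distrib, ← h2]
  have hk := (qfac_pos hq k).ne'
  have hnk := (qfac_pos hq (n - k)).ne'
  field_simp

lemma gbinom_zero (n : ℕ) : gbinom q n 0 = 1 := by simp [gbinom]

lemma qfac_succ (n : ℕ) : qfac q (n + 1) = qfac q n * (q ^ (n + 1) - 1) :=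
  Finset.prod_Ioc_succ_top (Nat.zero_le _) _

lemma qpl_succ (n : ℕ) : qpl q (n + 1) = qpl q n * (q ^ (n + 1) + 1) :=
  Finset.prod_Ioc_succ_top (Nat.zero_le _) _

lemma gbinom_self (hq : 1 < q) (n : ℕ) : gbinom q n n = 1 := by
  rw [gbinom_eq hq le_rfl, Nat.sub_self]
  have h0 : qfac q 0 = 1 := by simp [qfac]
  rw [h0, mul_one, div_self (qfac_pos hq n).ne']

lemma gbinom_symm (hq : 1 < q) {k n : ℕ} (h : k ≤ n) :
    gbinom q n (n - k) = gbinom q n k := by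
  rw [gbinom_eq hq (Nat.sub_le n k), gbinom_eq hq h]
  have e1 : n - (n - k) = k := by omega
  rw [e1, mul_comm]

lemma one_lt_qpow (hq : 1 < q) {j : ℕ} (hj : 1 ≤ j) : 1 < q ^ j :=
  one_lt_pow₀ hq (by omega)

lemma gbinom_pascal (hq : 1 < q) {k n : ℕ} (h : k + 1 ≤ n) :
    gbinom q (n + 1) (k + 1) = gbinom q n (k + 1) + q ^ (n - k) * gbinom q n k := by
  rw [gbinom_eq hq (by omega : k + 1 ≤ n + 1), gbinom_eq hq h, gbinom_eq hq (by omega : k ≤ n)]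
  have e1 : n + 1 - (k + 1) = n - k := by omega
  have e2 : n - (k + 1) = n - k - 1 := by omega
  rw [e1, e2]
  have hab : q ^ (n + 1) = q ^ (k + 1) * q ^ (n - k) := by
    rw [← pow_add]; congr 1; omega
  have h1 : qfac q (n + 1) = qfac q n * (q ^ (k + 1) * q ^ (n - k) - 1) := by
    rw [qfac_succ, hab]
  have h2 : qfac q (n - k) = qfac q (n - k - 1) * (q ^ (n - k) - 1) := by
    have : n - k = (n - k - 1) + 1 := by omega
    rw [this, qfac_succ]; rw [← this]
  have h3 : qfac q (k + 1) = qfac q k * (q ^ (k + 1) - 1) := qfac_succ k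
  rw [h1, h2, h3]
  have hN := (qfac_pos hq n).ne'
  have hA := (qfac_pos hq k).ne'
  have hB := (qfac_pos hq (n - k - 1)).ne'
  have ha : q ^ (k + 1) - 1 ≠ 0 := by have := one_lt_qpow hq (by omega : 1 ≤ k + 1); linarith
  have hb : q ^ (n - k) - 1 ≠ 0 := by have := one_lt_qpow hq (by omega : 1 ≤ n - k); linarith
  field_simp
  ring

lemma gbinom_trinom (hq : 1 < q) {i ℓ m : ℕ} (h : ℓ + i ≤ m) :
    gbinom q m ℓ * gbinom q (m - ℓ) i = gbinom q m i * gbinom q (m - i) ℓ := by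
  rw [gbinom_eq hq (by omega : ℓ ≤ m), gbinom_eq hq (by omega : i ≤ m - ℓ),
    gbinom_eq hq (by omega : i ≤ m), gbinom_eq hq (by omega : ℓ ≤ m - i)]
  have e1 : m - ℓ - i = m - i - ℓ := by omega
  rw [e1]
  have h1 := (qfac_pos hq ℓ).ne'
  have h2 := (qfac_pos hq i).ne'
  have h3 := (qfac_pos hq (m - ℓ)).ne'
  have h4 := (qfac_pos hq (m - i)).ne'
  have h5 := (qfac_pos hq (m - i - ℓ)).ne'
  field_simp

lemma qfac_sq (n : ℕ) : qfac (q ^ 2) n = qfac q n * qpl q n := by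
  unfold qfac qpl
  rw [← Finset.prod_mul_distrib]
  apply Finset.prod_congr rfl
  intro j _
  rw [← pow_mul, mul_comm 2 j, pow_mul]
  ring

lemma one_lt_sq (hq : 1 < q) : 1 < q ^ 2 := one_lt_pow₀ hq (by omega)

lemma qpl_split {i m : ℕ} (h : i ≤ m) :
    qpl q m = qpl q i * ∏ k ∈ Finset.Icc (i + 1) m, (q ^ k + 1) := by
  unfold qpl
  rw [Finset.Icc_add_one_left_eq_Ioc, ← Finset.prod_Ioc_consecutive _ (Nat.zero_le i) h]

lemma lemG (hq : 1 < q) {i m : ℕ} (h : i ≤ m) :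
    gbinom (q ^ 2) m i * qpl q (m - i) =
      gbinom q m i * ∏ k ∈ Finset.Icc (i + 1) m, (q ^ k + 1) := by
  rw [gbinom_eq (one_lt_sq hq) h, gbinom_eq hq h, qfac_sq, qfac_sq, qfac_sq]
  have h1 := (qfac_pos hq i).ne'
  have h2 := (qfac_pos hq (m - i)).ne'
  have h3 := (qfac_pos hq m).ne'
  have p1 := (qpl_pos hq i).ne'
  have p2 := (qpl_pos hq (m - i)).ne'
  have hsplit := qpl_split (q := q) h
  rw [hsplit]
  field_simp

lemma tri_succ (s : ℕ) : (s + 1) * s / 2 = s * (s - 1) / 2 + s := by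
  have h1 : (s + 1) * s / 2 = (s + 1).choose 2 := by
    rw [Nat.choose_two_right]; congr 1
  have h2 : s * (s - 1) / 2 = s.choose 2 := (Nat.choose_two_right s).symm
  rw [h1, h2, Nat.choose_succ_succ]
  simp [Nat.choose_one_right]
  omega

lemma qbt (hq : 1 < q) (x : ℝ) (r : ℕ) :
    ∏ j ∈ Finset.range r, (x - q ^ j) =
      ∑ s ∈ Finset.range (r + 1),
        (-1) ^ s * q ^ (s * (s - 1) / 2) * gbinom q r s * x ^ (r - s) := by
  induction r with
  | zero => simp [gbinom_zero]
  | succ r ih =>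
    rw [Finset.prod_range_succ, ih, mul_sub, Finset.sum_mul, Finset.sum_mul]
    conv_lhs => rw [Finset.sum_range_succ' _ r, Finset.sum_range_succ _ r]
    conv_rhs => rw [Finset.sum_range_succ' _ (r + 1), Finset.sum_range_succ _ r]
    have hterm : ∀ s ∈ Finset.range r,
        (-1) ^ (s + 1) * q ^ ((s + 1) * (s + 1 - 1) / 2) * gbinom q r (s + 1) *
          x ^ (r - (s + 1)) * x
        - (-1) ^ s * q ^ (s * (s - 1) / 2) * gbinom q r s * x ^ (r - s) * q ^ r =
        (-1) ^ (s + 1) * q ^ ((s + 1) * (s + 1 - 1) / 2) * gbinom q (r + 1) (s + 1) *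
          x ^ (r + 1 - (s + 1)) := by
      intro s hs
      have hsr : s < r := Finset.mem_range.mp hs
      have e1 : (s + 1) * (s + 1 - 1) / 2 = s * (s - 1) / 2 + s := by
        simpa using tri_succ s
      have e2 : r + 1 - (s + 1) = r - s := by omega
      have e3 : x ^ (r - (s + 1)) * x = x ^ (r - s) := by
        rw [← pow_succ]; congr 1; omega
      have e4 : (q : ℝ) ^ (s * (s - 1) / 2 + s) * q ^ (r - s) = q ^ (s * (s - 1) / 2) * q ^ r := by
        rw [← pow_add, ← pow_add]; congr 1; omega
      rw [gbinom_pascal hq (by omega : s + 1 ≤ r), e1, e2]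
      linear_combination ((-1:ℝ)) ^ (s+1) * q ^ (s * (s - 1) / 2 + s) * gbinom q r (s+1) * e3 +
        ((-1:ℝ)) ^ s * gbinom q r s * x ^ (r - s) * e4
    have hS : (∑ s ∈ Finset.range r,
        ((-1) ^ (s + 1) * q ^ ((s + 1) * (s + 1 - 1) / 2) * gbinom q r (s + 1) *
          x ^ (r - (s + 1)) * x
        - (-1) ^ s * q ^ (s * (s - 1) / 2) * gbinom q r s * x ^ (r - s) * q ^ r)) =
        ∑ s ∈ Finset.range r, (-1) ^ (s + 1) * q ^ ((s + 1) * (s + 1 - 1) / 2) *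
          gbinom q (r + 1) (s + 1) * x ^ (r + 1 - (s + 1)) :=
      Finset.sum_congr rfl hterm
    rw [Finset.sum_sub_distrib] at hS
    have g1 : gbinom q (r + 1) (r + 1) = 1 := gbinom_self hq _
    have g2 : gbinom q r r = 1 := gbinom_self hq _
    have e5 : (r + 1) * (r + 1 - 1) / 2 = r * (r - 1) / 2 + r := by simpa using tri_succ r
    simp only [Nat.sub_zero, gbinom_zero, g1, g2, e5, pow_zero, one_mul, mul_one,
      Nat.sub_self]
    linear_combination hS

lemma sq_pow (n : ℕ) : (q ^ 2) ^ n = q ^ (2 * n) := by rw [← pow_mul]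

lemma claimA (hq : 1 < q) (r : ℕ) :
    ∑ ℓ ∈ Finset.range (r + 1),
        q ^ (ℓ ^ 2 + (r - ℓ) * (r - ℓ - 1)) * gbinom (q ^ 2) r ℓ =
      q ^ (r * (r - 1) / 2) * qpl q r := by
  have hp : 1 < q ^ 2 := one_lt_sq hq
  induction r with
  | zero => simp [gbinom_zero, qpl]
  | succ r ih =>
    -- U = q^r * S
    have hU : ∑ ℓ ∈ Finset.range (r + 1),
        q ^ (ℓ ^ 2 + (r - ℓ) * (r - ℓ - 1) + 2 * (r - ℓ)) * gbinom (q ^ 2) r ℓ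
        = q ^ r * ∑ ℓ ∈ Finset.range (r + 1),
            q ^ (ℓ ^ 2 + (r - ℓ) * (r - ℓ - 1)) * gbinom (q ^ 2) r ℓ := by
      rw [Finset.mul_sum,
        ← Finset.sum_range_reflect
          (fun ℓ => q ^ r * (q ^ (ℓ ^ 2 + (r - ℓ) * (r - ℓ - 1)) * gbinom (q ^ 2) r ℓ)) (r + 1)]
      apply Finset.sum_congr rfl
      intro ℓ hℓ
      have hℓr : ℓ ≤ r := by have := Finset.mem_range.mp hℓ; omega
      have e0 : r + 1 - 1 - ℓ = r - ℓ := by omega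
      rw [e0]
      have e1 : r - (r - ℓ) = ℓ := by omega
      rw [e1]
      have hsym : gbinom (q ^ 2) r (r - ℓ) = gbinom (q ^ 2) r ℓ := gbinom_symm hp hℓr
      rw [hsym, ← mul_assoc, ← pow_add]
      congr 2
      obtain ⟨a, rfl⟩ : ∃ a, r = ℓ + a := ⟨r - ℓ, by omega⟩
      have e2 : ℓ + a - ℓ = a := by omega
      rw [e2]
      rcases a with _ | b <;> rcases ℓ with _ | c <;> simp [Nat.succ_sub_one] <;> ring
    -- main decomposition  S(r+1) = q^(2r+1) S r + U r
    have hstep : ∑ ℓ ∈ Finset.range (r + 2),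
        q ^ (ℓ ^ 2 + (r + 1 - ℓ) * (r + 1 - ℓ - 1)) * gbinom (q ^ 2) (r + 1) ℓ
        = q ^ (2 * r + 1) * ∑ ℓ ∈ Finset.range (r + 1),
            q ^ (ℓ ^ 2 + (r - ℓ) * (r - ℓ - 1)) * gbinom (q ^ 2) r ℓ
          + ∑ ℓ ∈ Finset.range (r + 1),
            q ^ (ℓ ^ 2 + (r - ℓ) * (r - ℓ - 1) + 2 * (r - ℓ)) * gbinom (q ^ 2) r ℓ := by
      have h1 := Finset.sum_range_succ'
        (fun ℓ => q ^ (ℓ ^ 2 + (r + 1 - ℓ) * (r + 1 - ℓ - 1)) * gbinom (q ^ 2) (r + 1) ℓ) (r + 1)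
      have h2 := Finset.sum_range_succ
        (fun ℓ => q ^ ((ℓ + 1) ^ 2 + (r + 1 - (ℓ + 1)) * (r + 1 - (ℓ + 1) - 1)) *
          gbinom (q ^ 2) (r + 1) (ℓ + 1)) r
      have h3 := Finset.sum_range_succ
        (fun ℓ => q ^ (2 * r + 1) * (q ^ (ℓ ^ 2 + (r - ℓ) * (r - ℓ - 1)) * gbinom (q ^ 2) r ℓ)) r
      have h4 := Finset.sum_range_succ'
        (fun ℓ => q ^ (ℓ ^ 2 + (r - ℓ) * (r - ℓ - 1) + 2 * (r - ℓ)) * gbinom (q ^ 2) r ℓ) r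
      rw [Finset.mul_sum, h1, h2, h3, h4]
      have hterm : ∀ ℓ ∈ Finset.range r,
          q ^ ((ℓ + 1) ^ 2 + (r + 1 - (ℓ + 1)) * (r + 1 - (ℓ + 1) - 1)) *
            gbinom (q ^ 2) (r + 1) (ℓ + 1)
          = q ^ (2 * r + 1) * (q ^ (ℓ ^ 2 + (r - ℓ) * (r - ℓ - 1)) * gbinom (q ^ 2) r ℓ)
            + q ^ ((ℓ + 1) ^ 2 + (r - (ℓ + 1)) * (r - (ℓ + 1) - 1) + 2 * (r - (ℓ + 1))) *
              gbinom (q ^ 2) r (ℓ + 1) := by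
        intro ℓ hℓ
        have hℓr : ℓ < r := Finset.mem_range.mp hℓ
        rw [gbinom_pascal hp (by omega : ℓ + 1 ≤ r), sq_pow]
        have e1 : r + 1 - (ℓ + 1) = r - ℓ := by omega
        rw [e1]
        have eA : (ℓ + 1) ^ 2 + (r - ℓ) * (r - ℓ - 1) + 2 * (r - ℓ)
            = 2 * r + 1 + (ℓ ^ 2 + (r - ℓ) * (r - ℓ - 1)) := by
          obtain ⟨a, rfl⟩ : ∃ a, r = ℓ + a := ⟨r - ℓ, by omega⟩
          have e2 : ℓ + a - ℓ = a := by omega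
          rw [e2]; ring
        have eB : (ℓ + 1) ^ 2 + (r - ℓ) * (r - ℓ - 1)
            = (ℓ + 1) ^ 2 + (r - (ℓ + 1)) * (r - (ℓ + 1) - 1) + 2 * (r - (ℓ + 1)) := by
          obtain ⟨b, rfl⟩ : ∃ b, r = ℓ + 1 + b := ⟨r - ℓ - 1, by omega⟩
          have e3 : ℓ + 1 + b - ℓ = b + 1 := by omega
          have e4 : ℓ + 1 + b - (ℓ + 1) = b := by omega
          rw [e3, e4]
          rcases b with _ | c <;> simp [Nat.succ_sub_one] <;> ring
        calc q ^ ((ℓ + 1) ^ 2 + (r - ℓ) * (r - ℓ - 1)) *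
              (gbinom (q ^ 2) r (ℓ + 1) + q ^ (2 * (r - ℓ)) * gbinom (q ^ 2) r ℓ)
            = q ^ ((ℓ + 1) ^ 2 + (r - ℓ) * (r - ℓ - 1) + 2 * (r - ℓ)) * gbinom (q ^ 2) r ℓ
              + q ^ ((ℓ + 1) ^ 2 + (r - ℓ) * (r - ℓ - 1)) * gbinom (q ^ 2) r (ℓ + 1) := by
              rw [pow_add]; ring
          _ = _ := by rw [eA, eB, pow_add]; ring
      rw [Finset.sum_congr rfl hterm, Finset.sum_add_distrib]
      have etop : q ^ ((r + 1) ^ 2 + (r + 1 - (r + 1)) * (r + 1 - (r + 1) - 1)) *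
          gbinom (q ^ 2) (r + 1) (r + 1)
          = q ^ (2 * r + 1) * (q ^ (r ^ 2 + (r - r) * (r - r - 1)) * gbinom (q ^ 2) r r) := by
        rw [gbinom_self hp, gbinom_self hp, Nat.sub_self, Nat.sub_self]
        simp only [Nat.zero_mul, Nat.add_zero, Nat.zero_sub, mul_one]
        rw [← pow_add]; congr 1; ring
      have ebot : q ^ ((0:ℕ) ^ 2 + (r + 1 - 0) * (r + 1 - 0 - 1)) * gbinom (q ^ 2) (r + 1) 0
          = q ^ ((0:ℕ) ^ 2 + (r - 0) * (r - 0 - 1) + 2 * (r - 0)) * gbinom (q ^ 2) r 0 := by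
        rw [gbinom_zero, gbinom_zero]
        simp only [Nat.sub_zero, Nat.add_sub_cancel, mul_one]
        congr 1
        rcases r with _ | c <;> simp [Nat.succ_sub_one] <;> ring
      rw [etop, ebot]
      ring
    rw [hstep, hU, ih]
    rw [qpl_succ]
    have e5 : (r + 1) * (r + 1 - 1) / 2 = r * (r - 1) / 2 + r := by simpa using tri_succ r
    rw [e5, pow_add, pow_add, pow_add]
    ring

lemma tri_half (f : ℕ → ℕ → ℝ) (m : ℕ) :
    ∑ a ∈ Finset.range (m + 1), ∑ b ∈ Finset.range (m - a + 1), f a b =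
      ∑ a ∈ Finset.range (m + 1), ∑ b ∈ Finset.range (m + 1),
        if a + b ≤ m then f a b else 0 := by
  apply Finset.sum_congr rfl
  intro a ha
  have ham : a ≤ m := by have := Finset.mem_range.mp ha; omega
  rw [← Finset.sum_filter]
  apply Finset.sum_congr
  · ext b; simp only [Finset.mem_filter, Finset.mem_range]; omega
  · intro _ _; rfl

lemma tri_swap (f : ℕ → ℕ → ℝ) (m : ℕ) :
    ∑ a ∈ Finset.range (m + 1), ∑ b ∈ Finset.range (m - a + 1), f a b =
      ∑ b ∈ Finset.range (m + 1), ∑ a ∈ Finset.range (m - b + 1), f a b := by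
  rw [tri_half f m, tri_half (fun b a => f a b) m, Finset.sum_comm]
  apply Finset.sum_congr rfl; intro a _
  apply Finset.sum_congr rfl; intro b _
  congr 1
  simp [Nat.add_comm]

lemma even_sq_half (s : ℕ) : 2 * (s * (s - 1) / 2) = s * (s - 1) := by
  rcases s with _ | t
  · simp
  · obtain ⟨c, hc⟩ := Nat.even_mul_succ_self t
    have h1 : (t + 1) * (t + 1 - 1) = t * (t + 1) := by
      simp [Nat.succ_sub_one]; ring
    rw [h1]
    omega

theorem stmt1 (q : ℝ) (hq : 1 < q) (m N : ℕ) (hmN : m ≤ N) :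
    ∑ i ∈ Finset.range (m + 1),
      (-1 : ℝ) ^ (m - i) * q ^ ((m - i) * (m - i - 1) / 2) * gbinom q m i *
        (∏ k ∈ Finset.Icc (i + 1) m, (q ^ k + 1)) * q ^ ((2 * i + 1) * N) =
    ∑ ℓ ∈ Finset.range (m + 1),
      (-1 : ℝ) ^ ℓ * q ^ (N + (m - ℓ) * (m - ℓ - 1) + ℓ ^ 2) * gbinom (q ^ 2) m ℓ *
        ∏ j ∈ Finset.range (m - ℓ), (q ^ (2 * (N - j)) - 1) := by
  have hp : 1 < q ^ 2 := one_lt_sq hq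
  symm
  calc
    ∑ ℓ ∈ Finset.range (m + 1),
      (-1 : ℝ) ^ ℓ * q ^ (N + (m - ℓ) * (m - ℓ - 1) + ℓ ^ 2) * gbinom (q ^ 2) m ℓ *
        ∏ j ∈ Finset.range (m - ℓ), (q ^ (2 * (N - j)) - 1)
      = ∑ ℓ ∈ Finset.range (m + 1), ∑ i ∈ Finset.range (m - ℓ + 1),
          (-1 : ℝ) ^ (m - i) * q ^ ((2 * i + 1) * N + ℓ ^ 2 + (m - ℓ - i) * (m - ℓ - i - 1)) *
            (gbinom (q ^ 2) m i * gbinom (q ^ 2) (m - i) ℓ) := by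
        apply Finset.sum_congr rfl
        intro ℓ hℓ
        have hℓm : ℓ ≤ m := by have := Finset.mem_range.mp hℓ; omega
        -- (a) absorb q^((m-ℓ)(m-ℓ-1)) into the product
        have ha : q ^ ((m - ℓ) * (m - ℓ - 1)) *
            ∏ j ∈ Finset.range (m - ℓ), (q ^ (2 * (N - j)) - 1) =
            ∏ j ∈ Finset.range (m - ℓ), (q ^ (2 * N) - (q ^ 2) ^ j) := by
          have hg : ∏ j ∈ Finset.range (m - ℓ), ((q ^ 2) ^ j) = q ^ ((m - ℓ) * (m - ℓ - 1)) := by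
            rw [Finset.prod_pow_eq_pow_sum, sq_pow]
            congr 1
            have := Finset.sum_range_id_mul_two (m - ℓ)
            omega
          rw [← hg, ← Finset.prod_mul_distrib]
          apply Finset.prod_congr rfl
          intro j hj
          have hjN : j ≤ N := by have := Finset.mem_range.mp hj; omega
          have e1 : (q ^ 2) ^ j * q ^ (2 * (N - j)) = q ^ (2 * N) := by
            rw [sq_pow, ← pow_add]; congr 1; omega
          nlinarith [e1]
        -- (b) q-binomial theorem
        have hb := qbt hp (q ^ (2 * N)) (m - ℓ)
        -- (c) reflect the inner sum
        have hc := (Finset.sum_range_reflect (fun s => (-1 : ℝ) ^ s *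
            (q ^ 2) ^ (s * (s - 1) / 2) * gbinom (q ^ 2) (m - ℓ) s *
            (q ^ (2 * N)) ^ (m - ℓ - s)) (m - ℓ + 1)).symm
        calc (-1 : ℝ) ^ ℓ * q ^ (N + (m - ℓ) * (m - ℓ - 1) + ℓ ^ 2) * gbinom (q ^ 2) m ℓ *
              ∏ j ∈ Finset.range (m - ℓ), (q ^ (2 * (N - j)) - 1)
            = (-1 : ℝ) ^ ℓ * q ^ (N + ℓ ^ 2) * gbinom (q ^ 2) m ℓ *
              (q ^ ((m - ℓ) * (m - ℓ - 1)) *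
                ∏ j ∈ Finset.range (m - ℓ), (q ^ (2 * (N - j)) - 1)) := by
              rw [pow_add, pow_add]; ring
          _ = (-1 : ℝ) ^ ℓ * q ^ (N + ℓ ^ 2) * gbinom (q ^ 2) m ℓ *
              ∑ s ∈ Finset.range (m - ℓ + 1), (-1 : ℝ) ^ s *
                (q ^ 2) ^ (s * (s - 1) / 2) * gbinom (q ^ 2) (m - ℓ) s *
                (q ^ (2 * N)) ^ (m - ℓ - s) := by rw [ha, hb]
          _ = (-1 : ℝ) ^ ℓ * q ^ (N + ℓ ^ 2) * gbinom (q ^ 2) m ℓ *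
              ∑ i ∈ Finset.range (m - ℓ + 1), (-1 : ℝ) ^ (m - ℓ + 1 - 1 - i) *
                (q ^ 2) ^ ((m - ℓ + 1 - 1 - i) * (m - ℓ + 1 - 1 - i - 1) / 2) *
                gbinom (q ^ 2) (m - ℓ) (m - ℓ + 1 - 1 - i) *
                (q ^ (2 * N)) ^ (m - ℓ - (m - ℓ + 1 - 1 - i)) := by rw [← hc]
          _ = ∑ i ∈ Finset.range (m - ℓ + 1),
              (-1 : ℝ) ^ (m - i) * q ^ ((2 * i + 1) * N + ℓ ^ 2 + (m - ℓ - i) * (m - ℓ - i - 1)) *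
                (gbinom (q ^ 2) m i * gbinom (q ^ 2) (m - i) ℓ) := by
              rw [Finset.mul_sum]
              apply Finset.sum_congr rfl
              intro i hi
              have him : i ≤ m - ℓ := by have := Finset.mem_range.mp hi; omega
              have e2 : m - ℓ + 1 - 1 - i = m - ℓ - i := by omega
              rw [e2]
              -- symmetry and trinomial
              have hsym : gbinom (q ^ 2) (m - ℓ) (m - ℓ - i) = gbinom (q ^ 2) (m - ℓ) i :=
                gbinom_symm hp him
              have htri : gbinom (q ^ 2) m ℓ * gbinom (q ^ 2) (m - ℓ) i =
                  gbinom (q ^ 2) m i * gbinom (q ^ 2) (m - i) ℓ :=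
                gbinom_trinom hp (by omega : ℓ + i ≤ m)
              have e3 : m - ℓ - (m - ℓ - i) = i := by omega
              rw [hsym, e3]
              -- signs
              have hsgn : (-1 : ℝ) ^ ℓ * (-1 : ℝ) ^ (m - ℓ - i) = (-1 : ℝ) ^ (m - i) := by
                rw [← pow_add]; congr 1; omega
              -- exponents
              have hexp : q ^ (N + ℓ ^ 2) * (q ^ 2) ^ ((m - ℓ - i) * (m - ℓ - i - 1) / 2) *
                  (q ^ (2 * N)) ^ i =
                  q ^ ((2 * i + 1) * N + ℓ ^ 2 + (m - ℓ - i) * (m - ℓ - i - 1)) := by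
                rw [sq_pow, ← pow_mul, ← pow_add, ← pow_add]
                congr 1
                have := even_sq_half (m - ℓ - i)
                have hN2 : 2 * N * i = 2 * (N * i) := by ring
                have hN3 : (2 * i + 1) * N = 2 * (N * i) + N := by ring
                omega
              calc (-1 : ℝ) ^ ℓ * q ^ (N + ℓ ^ 2) * gbinom (q ^ 2) m ℓ *
                    ((-1 : ℝ) ^ (m - ℓ - i) * (q ^ 2) ^ ((m - ℓ - i) * (m - ℓ - i - 1) / 2) *
                      gbinom (q ^ 2) (m - ℓ) i * (q ^ (2 * N)) ^ i)
                  = ((-1 : ℝ) ^ ℓ * (-1 : ℝ) ^ (m - ℓ - i)) *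
                    (q ^ (N + ℓ ^ 2) * (q ^ 2) ^ ((m - ℓ - i) * (m - ℓ - i - 1) / 2) *
                      (q ^ (2 * N)) ^ i) *
                    (gbinom (q ^ 2) m ℓ * gbinom (q ^ 2) (m - ℓ) i) := by ring
                _ = _ := by rw [hsgn, hexp, htri]
    _ = ∑ i ∈ Finset.range (m + 1), ∑ ℓ ∈ Finset.range (m - i + 1),
          (-1 : ℝ) ^ (m - i) * q ^ ((2 * i + 1) * N + ℓ ^ 2 + (m - ℓ - i) * (m - ℓ - i - 1)) *
            (gbinom (q ^ 2) m i * gbinom (q ^ 2) (m - i) ℓ) :=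
        tri_swap (fun ℓ i => (-1 : ℝ) ^ (m - i) *
          q ^ ((2 * i + 1) * N + ℓ ^ 2 + (m - ℓ - i) * (m - ℓ - i - 1)) *
          (gbinom (q ^ 2) m i * gbinom (q ^ 2) (m - i) ℓ)) m
    _ = ∑ i ∈ Finset.range (m + 1),
          (-1 : ℝ) ^ (m - i) * q ^ ((m - i) * (m - i - 1) / 2) * gbinom q m i *
            (∏ k ∈ Finset.Icc (i + 1) m, (q ^ k + 1)) * q ^ ((2 * i + 1) * N) := by
        apply Finset.sum_congr rfl
        intro i hi
        have him : i ≤ m := by have := Finset.mem_range.mp hi; omega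
        have hinner : ∀ ℓ ∈ Finset.range (m - i + 1),
            (-1 : ℝ) ^ (m - i) * q ^ ((2 * i + 1) * N + ℓ ^ 2 +
              (m - ℓ - i) * (m - ℓ - i - 1)) *
              (gbinom (q ^ 2) m i * gbinom (q ^ 2) (m - i) ℓ) =
            ((-1 : ℝ) ^ (m - i) * q ^ ((2 * i + 1) * N) * gbinom (q ^ 2) m i) *
              (q ^ (ℓ ^ 2 + (m - i - ℓ) * (m - i - ℓ - 1)) * gbinom (q ^ 2) (m - i) ℓ) := by
          intro ℓ hℓ
          have hℓr : ℓ ≤ m - i := by have := Finset.mem_range.mp hℓ; omega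
          have e4 : m - ℓ - i = m - i - ℓ := by omega
          rw [e4, pow_add, pow_add]
          ring
        rw [Finset.sum_congr rfl hinner, ← Finset.mul_sum, claimA hq (m - i)]
        have hg := lemG hq him
        linear_combination ((-1 : ℝ)) ^ (m - i) * q ^ ((2 * i + 1) * N) *
          q ^ ((m - i) * (m - i - 1) / 2) * hg
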